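/- Let G be a group and let g, t ∈ G be such that ⁅g, t⁻ᵏ g tᵏ⁆ = 1 for all k ∈ ℤ. Then the subgroup of G generated by the set { ⁅g, tᵏ⁆ : k ∈ ℤ } is commutative. -/

import Mathlib

/-- The paper's commutator convention: `⁅x, y⁆ = x⁻¹ y⁻¹ x y`. -/
def pc {G : Type*} [Group G] (x y : G) : G := x⁻¹ * y⁻¹ * x * y

/-- If `g, t ∈ G` satisfy `⁅g, t⁻ᵏ g tᵏ⁆ = 1` for all `k ∈ ℤ`, then the subgroup
generated by `{ ⁅g, tᵏ⁆ : k ∈ ℤ }` is commutative. -/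
theorem stmt8 {G : Type*} [Group G] (g t : G)
    (h : ∀ k : ℤ, pc g ((t ^ k)⁻¹ * g * t ^ k) = 1) :
    ∀ x ∈ Subgroup.closure {x : G | ∃ k : ℤ, x = pc g (t ^ k)},
      ∀ y ∈ Subgroup.closure {x : G | ∃ k : ℤ, x = pc g (t ^ k)},
        x * y = y * x := by
  -- g commutes with each conjugate a_k := t⁻ᵏ g tᵏ
  have hc : ∀ k : ℤ, Commute g ((t ^ k)⁻¹ * g * t ^ k) := by
    intro k
    have h2 := h k
    unfold pc at h2
    set a := (t ^ k)⁻¹ * g * t ^ k with ha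
    have h3 : (open scoped commutatorElement in ⁅g⁻¹, a⁻¹⁆ = 1) := by rw [commutatorElement_def, ← h2]; group
    have h4 : Commute g⁻¹ a⁻¹ := commutatorElement_eq_one_iff_commute.mp h3
    simpa using h4.inv_inv
  -- conjugates commute with each other
  have key : ∀ j k : ℤ, Commute ((t ^ j)⁻¹ * g * t ^ j) ((t ^ k)⁻¹ * g * t ^ k) := by
    intro j k
    have h1 := (hc (k - j)).map (MulAut.conj ((t ^ j)⁻¹)).toMonoidHom
    simp only [MulAut.conj_apply, MulEquiv.coe_toMonoidHom, inv_inv] at h1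
    have e1 : (t ^ j)⁻¹ * g * t ^ j = (t ^ j)⁻¹ * g * t ^ j := rfl
    have e2 : (t ^ j)⁻¹ * ((t ^ (k - j))⁻¹ * g * t ^ (k - j)) * t ^ j
        = (t ^ k)⁻¹ * g * t ^ k := by
      rw [← zpow_neg, ← zpow_neg, ← zpow_neg]
      rw [show (-(k - j) : ℤ) = -k + j by ring, show (k : ℤ) = (k - j) + j by ring]
      rw [zpow_add, zpow_add]
      group
    rwa [e2] at h1
  -- generators commute
  have hgen : ∀ x ∈ {x : G | ∃ k : ℤ, x = pc g (t ^ k)},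
      ∀ y ∈ {x : G | ∃ k : ℤ, x = pc g (t ^ k)}, Commute x y := by
    rintro x ⟨j, rfl⟩ y ⟨k, rfl⟩
    have ej : pc g (t ^ j) = g⁻¹ * ((t ^ j)⁻¹ * g * t ^ j) := by unfold pc; group
    have ek : pc g (t ^ k) = g⁻¹ * ((t ^ k)⁻¹ * g * t ^ k) := by unfold pc; group
    rw [ej, ek]
    exact Commute.mul_left ((Commute.refl g⁻¹).mul_right (hc k).inv_left)
      (((hc j).symm.inv_right).mul_right (key j k))
  intro x hx y hy
  exact Subgroup.closure_induction₂ (p := fun x y _ _ => Commute x y)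
    (fun a b ha hb => hgen a ha b hb) (fun x _ => Commute.one_left x) (fun x _ => Commute.one_right x)
    (fun x y z _ _ _ h1 h2 => Commute.mul_left h1 h2)
    (fun y z x _ _ _ h1 h2 => Commute.mul_right h1 h2)
    (fun _ _ _ _ hh => Commute.inv_left hh)
    (fun _ _ _ _ hh => Commute.inv_right hh) hx hy
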